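/- Let P ⊂ ℝⁿ be a polyhedral cone {x : f_i(x) ≥ 0, i=1,…,m} defined by linear functions f_i, containing no line and with nonempty interior, and let Φ(x) = Σ_i log(f_i(x)) ∇f_i on int P. Then there is a constant C > 0 such that ‖dΦ_x(w)‖₂ ≥ C ‖w‖_x for all x ∈ int P and w ∈ ℝⁿ, where ‖·‖_x is the Hilbert Finsler norm of the cone P (defined via the chord through x in direction w, with the convention 1/t = 0 when an endpoint is at infinity). -/

import Mathlib

open RealInnerProductSpace

/-- The reciprocal `1/t₁` of the chord parameter `t₁ = sup{t > 0 : x + t w ∈ P}`, with the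
convention `1/∞ := 0` when the ray stays in `P` forever. -/
noncomputable def chordRecip {n : ℕ} (P : Set (EuclideanSpace ℝ (Fin n)))
    (x w : EuclideanSpace ℝ (Fin n)) : ℝ :=
  open Classical in
  if BddAbove {t : ℝ | 0 < t ∧ x + t • w ∈ P} then
    (sSup {t : ℝ | 0 < t ∧ x + t • w ∈ P})⁻¹ else 0

/-- The Hilbert Finsler norm of an unbounded convex set: `‖w‖ₓ = (1/2)(1/t₁ + 1/t₂)`. -/
noncomputable def coneFinsler {n : ℕ} (P : Set (EuclideanSpace ℝ (Fin n)))
    (x w : EuclideanSpace ℝ (Fin n)) : ℝ :=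
  (1/2) * (chordRecip P x w + chordRecip P x (-w))


private lemma cone_interior_pos {n m : ℕ} (g : Fin m → EuclideanSpace ℝ (Fin n))
    {P : Set (EuclideanSpace ℝ (Fin n))}
    (hP : P = {x | ∀ i, 0 ≤ ⟪g i, x⟫}) {x : EuclideanSpace ℝ (Fin n)}
    (hx : x ∈ interior P) (i : Fin m) (hg : g i ≠ 0) : 0 < ⟪g i, x⟫ := by
  obtain ⟨ε, hε, hball⟩ := Metric.isOpen_iff.mp isOpen_interior x hx
  have hgn : (0:ℝ) < ‖g i‖ := norm_pos_iff.mpr hg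
  set y := x - (ε / (2 * ‖g i‖)) • g i with hy
  have hyb : y ∈ Metric.ball x ε := by
    rw [Metric.mem_ball, dist_eq_norm, hy]
    have : x - (ε / (2 * ‖g i‖)) • g i - x = -((ε / (2 * ‖g i‖)) • g i) := by abel
    rw [this, norm_neg, norm_smul, Real.norm_eq_abs, abs_of_pos (by positivity)]
    rw [div_mul_eq_mul_div, mul_comm]
    rw [div_lt_iff₀ (by positivity)]
    nlinarith
  have hyP : y ∈ P := interior_subset (hball hyb)
  rw [hP] at hyP
  have := hyP i
  rw [hy, inner_sub_right, real_inner_smul_right, real_inner_self_eq_norm_sq] at this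
  have hq : ε / (2 * ‖g i‖) * ‖g i‖ ^ 2 = ε * ‖g i‖ / 2 := by
    field_simp
  nlinarith [this, hq]

private lemma cone_chordRecip_le {n m : ℕ} (g : Fin m → EuclideanSpace ℝ (Fin n))
    {P : Set (EuclideanSpace ℝ (Fin n))}
    (hP : P = {x | ∀ i, 0 ≤ ⟪g i, x⟫}) {x : EuclideanSpace ℝ (Fin n)}
    (hx : x ∈ interior P)
    (hpos : ∀ i, g i ≠ 0 → 0 < ⟪g i, x⟫)
    (w : EuclideanSpace ℝ (Fin n)) :
    chordRecip P x w ≤ ∑ i, |⟪g i, w⟫| / ⟪g i, x⟫ := by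
  have hxP : x ∈ P := interior_subset hx
  rw [hP] at hxP
  set S := ∑ i, |⟪g i, w⟫| / ⟪g i, x⟫ with hSdef
  have hterm : ∀ i, 0 ≤ |⟪g i, w⟫| / ⟪g i, x⟫ := fun i => div_nonneg (abs_nonneg _) (hxP i)
  have hS0 : 0 ≤ S := Finset.sum_nonneg fun i _ => hterm i
  unfold chordRecip
  split_ifs with hB
  · -- bounded case : S > 0
    have hSpos : 0 < S := by
      rcases hS0.lt_or_eq with h | h
      · exact h
      · exfalso
        -- all b i = 0, so the ray set is Ioi 0, unbounded
        have hb0 : ∀ i, ⟪g i, w⟫ = 0 := by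
          intro i
          by_cases hg : g i = 0
          · simp [hg]
          · have := (Finset.sum_eq_zero_iff_of_nonneg (fun i _ => hterm i)).mp h.symm i (Finset.mem_univ i)
            have hd := hpos i hg
            rw [div_eq_zero_iff] at this
            rcases this with h' | h'
            · exact abs_eq_zero.mp h'
            · exact absurd h' hd.ne'
        have hsub : Set.Ioi (0:ℝ) ⊆ {t : ℝ | 0 < t ∧ x + t • w ∈ P} := by
          intro t ht
          refine ⟨ht, ?_⟩
          rw [hP]
          intro i
          rw [inner_add_right, real_inner_smul_right, hb0 i, mul_zero, add_zero]
          exact hxP i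
        exact absurd (hB.mono hsub) (not_bddAbove_Ioi 0)
    have hsub : Set.Ioo (0:ℝ) (1/S) ⊆ {t : ℝ | 0 < t ∧ x + t • w ∈ P} := by
      rintro t ⟨ht0, ht1⟩
      refine ⟨ht0, ?_⟩
      rw [hP]
      intro i
      rw [inner_add_right, real_inner_smul_right]
      by_cases hg : g i = 0
      · simp [hg]
      · have hd := hpos i hg
        have hbi : |⟪g i, w⟫| ≤ S * ⟪g i, x⟫ := by
          have : |⟪g i, w⟫| / ⟪g i, x⟫ ≤ S :=
            Finset.single_le_sum (fun i _ => hterm i) (Finset.mem_univ i)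
          calc |⟪g i, w⟫| = (|⟪g i, w⟫| / ⟪g i, x⟫) * ⟪g i, x⟫ := (div_mul_cancel₀ _ hd.ne').symm
          _ ≤ S * ⟪g i, x⟫ := mul_le_mul_of_nonneg_right this hd.le
        have htS : t * S < 1 := by
          rw [← lt_div_iff₀ hSpos] at *
          linarith [ht1]
        nlinarith [neg_abs_le ⟪g i, w⟫, mul_le_mul_of_nonneg_left hbi ht0.le]
    have h1 : 1/S ≤ sSup {t : ℝ | 0 < t ∧ x + t • w ∈ P} := by
      have hne : (Set.Ioo (0:ℝ) (1/S)).Nonempty := Set.nonempty_Ioo.mpr (by positivity)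
      calc (1:ℝ)/S = sSup (Set.Ioo (0:ℝ) (1/S)) := (csSup_Ioo (by positivity)).symm
      _ ≤ _ := csSup_le_csSup hB hne hsub
    have hsup : 0 < sSup {t : ℝ | 0 < t ∧ x + t • w ∈ P} :=
      lt_of_lt_of_le (by positivity) h1
    calc (sSup {t : ℝ | 0 < t ∧ x + t • w ∈ P})⁻¹ ≤ (1/S)⁻¹ := by
          apply inv_anti₀ (by positivity) h1
    _ = S := by simp
  · exact hS0

private lemma cone_key_bound {n m : ℕ} (g : Fin m → EuclideanSpace ℝ (Fin n)) :
    ∃ C : ℝ, 0 < C ∧ ∀ (w : EuclideanSpace ℝ (Fin n)) (a : Fin m → ℝ),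
      (∀ i, 0 ≤ a i * ⟪g i, w⟫) → (∀ i, ⟪g i, w⟫ = 0 → a i = 0) →
      C * ∑ i, |a i| ≤ ‖∑ i, a i • g i‖ := by
  classical
  have main : ∀ σ : Fin m → SignType, ∃ C : ℝ, 0 < C ∧
      ∀ (w : EuclideanSpace ℝ (Fin n)) (a : Fin m → ℝ),
        (∀ i, SignType.sign (⟪g i, w⟫ : ℝ) = σ i) →
        (∀ i, 0 ≤ a i * ⟪g i, w⟫) → (∀ i, ⟪g i, w⟫ = 0 → a i = 0) →
        C * ∑ i, |a i| ≤ ‖∑ i, a i • g i‖ := by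
    intro σ
    set K : Set (Fin m → ℝ) :=
      {a | (∀ i, 0 ≤ a i * ((σ i : ℤ) : ℝ)) ∧ ∀ i, σ i = 0 → a i = 0} with hK
    -- membership derivation
    have memK : ∀ (w : EuclideanSpace ℝ (Fin n)) (a : Fin m → ℝ),
        (∀ i, SignType.sign (⟪g i, w⟫ : ℝ) = σ i) →
        (∀ i, 0 ≤ a i * ⟪g i, w⟫) → (∀ i, ⟪g i, w⟫ = 0 → a i = 0) → a ∈ K := by
      intro w a hσ h1 h2
      constructor
      · intro i
        rcases lt_trichotomy (⟪g i, w⟫ : ℝ) 0 with hb | hb | hb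
        · have : σ i = -1 := by rw [← hσ i, sign_eq_neg_one_iff]; exact hb
          rw [this]
          have ha : a i ≤ 0 := by nlinarith [h1 i]
          simp only [SignType.coe_neg_one]
          push_cast
          nlinarith
        · rw [h2 i hb, zero_mul]
        · have : σ i = 1 := by rw [← hσ i, sign_eq_one_iff]; exact hb
          rw [this]
          have ha : 0 ≤ a i := by nlinarith [h1 i]
          simp only [SignType.coe_one]
          push_cast
          nlinarith
      · intro i h0
        apply h2 i
        have := hσ i
        rw [h0, sign_eq_zero_iff] at this
        exact this
    -- K is closed under positive scaling
    have scaleK : ∀ (r : ℝ), 0 < r → ∀ a ∈ K, (r • a) ∈ K := by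
      intro r hr a ⟨ha1, ha2⟩
      constructor
      · intro i
        have := ha1 i
        simp only [Pi.smul_apply, smul_eq_mul]
        nlinarith
      · intro i h0
        simp [ha2 i h0]
    set Sph : Set (Fin m → ℝ) := K ∩ {a | ∑ i, |a i| = 1} with hSph
    by_cases hr : ∃ w : EuclideanSpace ℝ (Fin n), ∀ i, SignType.sign (⟪g i, w⟫ : ℝ) = σ i
    · by_cases hne : Sph.Nonempty
      · -- compactness
        have hKc : IsClosed K := by
          apply IsClosed.inter
          · show IsClosed {a : Fin m → ℝ | ∀ i, 0 ≤ a i * ((σ i : ℤ) : ℝ)}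
            rw [Set.setOf_forall]
            exact isClosed_iInter fun i =>
              isClosed_le continuous_const ((continuous_apply i).mul continuous_const)
          · show IsClosed {a : Fin m → ℝ | ∀ i, σ i = 0 → a i = 0}
            rw [Set.setOf_forall]
            refine isClosed_iInter fun i => ?_
            by_cases h : σ i = 0
            · simp only [h, forall_true_left]
              exact isClosed_eq (continuous_apply i) continuous_const
            · simp only [h, IsEmpty.forall_iff, false_implies]
              exact isClosed_univ
        have hSc : IsClosed Sph := by
          apply hKc.inter
          exact isClosed_eq (continuous_finset_sum _ fun i _ => (continuous_apply i).abs)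
            continuous_const
        have hSb : Sph ⊆ Metric.closedBall 0 1 := by
          rintro a ⟨-, ha⟩
          rw [Metric.mem_closedBall, dist_zero_right]
          rw [pi_norm_le_iff_of_nonneg zero_le_one]
          intro i
          rw [Real.norm_eq_abs]
          calc |a i| ≤ ∑ j, |a j| :=
                Finset.single_le_sum (f := fun j => |a j|) (fun j _ => abs_nonneg _)
                  (Finset.mem_univ i)
          _ = 1 := ha
        have hScpt : IsCompact Sph :=
          (isCompact_closedBall 0 1).of_isClosed_subset hSc hSb
        have hcont0 : Continuous fun a : Fin m → ℝ => ∑ i, a i • g i :=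
          continuous_finset_sum _ fun i _ => (continuous_apply i).smul continuous_const
        have hcont : Continuous fun a : Fin m → ℝ => ‖∑ i, a i • g i‖ := hcont0.norm
        obtain ⟨a₀, ha₀, hmin⟩ := hScpt.exists_isMinOn hne hcont.continuousOn
        refine ⟨‖∑ i, a₀ i • g i‖, ?_, ?_⟩
        · -- positivity
          rcases (norm_nonneg (∑ i, a₀ i • g i)).lt_or_eq with h | h
          · exact h
          · exfalso
            have hL0 : ∑ i, a₀ i • g i = 0 := norm_eq_zero.mp h.symm
            obtain ⟨w, hw⟩ := hr
            have hsum : ∑ i, a₀ i * ⟪g i, w⟫ = 0 := by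
              have : ⟪∑ i, a₀ i • g i, w⟫ = (0:ℝ) := by rw [hL0, inner_zero_left]
              rw [sum_inner] at this
              simp_rw [real_inner_smul_left] at this
              exact this
            obtain ⟨hK1, hK2⟩ := ha₀.1
            have hnn : ∀ i ∈ Finset.univ, 0 ≤ a₀ i * ⟪g i, w⟫ := by
              intro i _
              rcases lt_trichotomy (⟪g i, w⟫ : ℝ) 0 with hb | hb | hb
              · have hσi : σ i = -1 := by rw [← hw i, sign_eq_neg_one_iff]; exact hb
                have := hK1 i; rw [hσi] at this
                simp only [SignType.coe_neg_one] at this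
                push_cast at this
                nlinarith
              · rw [hb, mul_zero]
              · have hσi : σ i = 1 := by rw [← hw i, sign_eq_one_iff]; exact hb
                have := hK1 i; rw [hσi] at this
                simp only [SignType.coe_one] at this
                push_cast at this
                nlinarith
            have hz := (Finset.sum_eq_zero_iff_of_nonneg hnn).mp hsum
            have ha0 : ∀ i, a₀ i = 0 := by
              intro i
              have := hz i (Finset.mem_univ i)
              rcases mul_eq_zero.mp this with h' | h'
              · exact h'
              · apply hK2 i
                rw [← hw i, h', sign_zero]
            have : ∑ i, |a₀ i| = 0 := Finset.sum_eq_zero fun i _ => by rw [ha0 i, abs_zero]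
            rw [ha₀.2] at this
            exact one_ne_zero this
        · -- the bound
          intro w a hσ h1 h2
          have haK : a ∈ K := memK w a hσ h1 h2
          set r : ℝ := ∑ i, |a i| with hrdef
          have hr0 : 0 ≤ r := Finset.sum_nonneg fun i _ => abs_nonneg _
          rcases hr0.lt_or_eq with hrpos | hrz
          · have ha' : (r⁻¹ • a) ∈ Sph := by
              refine ⟨scaleK r⁻¹ (by positivity) a haK, ?_⟩
              simp only [Set.mem_setOf_eq, Pi.smul_apply, smul_eq_mul, abs_mul,
                abs_of_pos (inv_pos.mpr hrpos)]
              rw [← Finset.mul_sum, ← hrdef, inv_mul_cancel₀ hrpos.ne']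
            have hle : ‖∑ i, a₀ i • g i‖ ≤ ‖∑ i, (r⁻¹ • a) i • g i‖ := hmin ha'
            have heq : ∑ i, (r⁻¹ • a) i • g i = r⁻¹ • ∑ i, a i • g i := by
              rw [Finset.smul_sum]
              exact Finset.sum_congr rfl fun i _ => by
                rw [Pi.smul_apply, smul_eq_mul, mul_smul]
            rw [heq] at hle
            rw [norm_smul, Real.norm_eq_abs, abs_of_pos (inv_pos.mpr hrpos)] at hle
            calc ‖∑ i, a₀ i • g i‖ * r ≤ r⁻¹ * ‖∑ i, a i • g i‖ * r :=
                  mul_le_mul_of_nonneg_right hle hrpos.le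
            _ = ‖∑ i, a i • g i‖ := by field_simp
          · rw [← hrz, mul_zero]
            exact norm_nonneg _
      · -- Sph empty : K = {0}
        refine ⟨1, one_pos, ?_⟩
        intro w a hσ h1 h2
        have haK : a ∈ K := memK w a hσ h1 h2
        have hr0 : ∑ i, |a i| = 0 := by
          by_contra hne'
          have hrpos : 0 < ∑ i, |a i| :=
            (Finset.sum_nonneg fun i _ => abs_nonneg _).lt_of_ne (Ne.symm hne')
          apply hne
          refine ⟨(∑ i, |a i|)⁻¹ • a, scaleK _ (by positivity) a haK, ?_⟩
          simp only [Set.mem_setOf_eq, Pi.smul_apply, smul_eq_mul, abs_mul,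
            abs_of_pos (inv_pos.mpr hrpos)]
          rw [← Finset.mul_sum, inv_mul_cancel₀ hrpos.ne']
        rw [hr0, mul_zero]
        exact norm_nonneg _
    · exact ⟨1, one_pos, fun w a hσ _ _ => absurd ⟨w, hσ⟩ hr⟩
  choose F hFpos hF using main
  have hne : (Finset.univ : Finset (Fin m → SignType)).Nonempty := Finset.univ_nonempty
  refine ⟨Finset.univ.inf' hne F, ?_, ?_⟩
  · rw [Finset.lt_inf'_iff]
    exact fun σ _ => hFpos σ
  · intro w a h1 h2
    set σ : Fin m → SignType := fun i => SignType.sign (⟪g i, w⟫ : ℝ) with hσdef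
    calc Finset.univ.inf' hne F * ∑ i, |a i|
        ≤ F σ * ∑ i, |a i| := by
          apply mul_le_mul_of_nonneg_right (Finset.inf'_le F (Finset.mem_univ σ))
          exact Finset.sum_nonneg fun i _ => abs_nonneg _
    _ ≤ ‖∑ i, a i • g i‖ := hF σ w a (fun i => rfl) h1 h2

/-- For a polyhedral cone `P = {x : fᵢ(x) ≥ 0}` (linear `fᵢ`, no line, nonempty interior),
there is `C > 0` with `‖dΦₓ(w)‖ ≥ C ‖w‖ₓ` for all interior `x` and all `w`, where `‖·‖ₓ` is
the Hilbert Finsler norm of the cone. -/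
theorem cone_dphi_lower_bound {n m : ℕ}
    (g : Fin m → EuclideanSpace ℝ (Fin n))
    (P : Set (EuclideanSpace ℝ (Fin n)))
    (hP : P = {x | ∀ i, 0 ≤ ⟪g i, x⟫})
    (hnoline : ∀ v : EuclideanSpace ℝ (Fin n), v ∈ P → -v ∈ P → v = 0)
    (hPint : (interior P).Nonempty) :
    ∃ C > 0, ∀ x ∈ interior P, ∀ w : EuclideanSpace ℝ (Fin n),
      C * coneFinsler P x w ≤ ‖∑ i, ((⟪g i, w⟫ / ⟪g i, x⟫) • g i)‖ := by
  obtain ⟨C, hC, hkey⟩ := cone_key_bound g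
  refine ⟨C, hC, ?_⟩
  intro x hx w
  have hpos : ∀ i, g i ≠ 0 → 0 < ⟪g i, x⟫ := fun i hg => cone_interior_pos g hP hx i hg
  have hxP : x ∈ P := interior_subset hx
  rw [hP] at hxP
  set a : Fin m → ℝ := fun i => ⟪g i, w⟫ / ⟪g i, x⟫ with hadef
  have h1 : ∀ i, 0 ≤ a i * ⟪g i, w⟫ := by
    intro i
    rw [hadef]
    rw [div_mul_eq_mul_div]
    exact div_nonneg (mul_self_nonneg _) (hxP i)
  have h2 : ∀ i, ⟪g i, w⟫ = 0 → a i = 0 := by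
    intro i h
    rw [hadef]
    simp [h]
  have hb := hkey w a h1 h2
  have habs : ∀ i, |a i| = |⟪g i, w⟫| / ⟪g i, x⟫ := by
    intro i
    rw [hadef, abs_div, abs_of_nonneg (hxP i)]
  have hS : ∑ i, |a i| = ∑ i, |⟪g i, w⟫| / ⟪g i, x⟫ :=
    Finset.sum_congr rfl fun i _ => habs i
  have hc1 := cone_chordRecip_le g hP hx hpos w
  have hc2 := cone_chordRecip_le g hP hx hpos (-w)
  have hSneg : (∑ i, |⟪g i, (-w : EuclideanSpace ℝ (Fin n))⟫| / ⟪g i, x⟫)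
      = ∑ i, |⟪g i, w⟫| / ⟪g i, x⟫ := by
    refine Finset.sum_congr rfl fun i _ => ?_
    rw [inner_neg_right, abs_neg]
  rw [hSneg] at hc2
  have hfin : coneFinsler P x w ≤ ∑ i, |⟪g i, w⟫| / ⟪g i, x⟫ := by
    unfold coneFinsler
    linarith
  calc C * coneFinsler P x w ≤ C * ∑ i, |⟪g i, w⟫| / ⟪g i, x⟫ :=
        mul_le_mul_of_nonneg_left hfin hC.le
  _ = C * ∑ i, |a i| := by rw [hS]
  _ ≤ ‖∑ i, a i • g i‖ := hb
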